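/- Fix d ≥ 1, A ∈ 𝓡, and r > 0, and let F be a distribution on [0,∞)^d with F ∈ (𝒞∩𝒫_𝒟)_A (so that 0 < J_{F_A}^− ≤ J_{F_A}^+ < ∞). Let the inter-arrival times θ_i := τ_i − τ_{i−1} (with τ₀ := 0) be nonnegative, identically distributed, with P(θ₁ > 0) > 0, and widely lower orthant dependent (WLOD): there exist finite positive constants g_L(n), n ≥ 1, such that P(θ₁ ≤ x₁, …, θ_n ≤ x_n) ≤ g_L(n) Π_{i=1}^n P(θ_i ≤ x_i) for all n and all real x₁, …, x_n. Suppose there exists δ ∈ (0, −log E[e^{−r J_{F_A}^− θ₁}]) such that limsup_{n→∞} g_L(n) e^{−δ n} < ∞. Then Assumption 3.1 holds: there exist q₁, q₂ with 0 < q₁ < J_{F_A}^− ≤ J_{F_A}^+ < q₂ < ∞ such that Σ_{i=1}^∞ (max(E[e^{−q₁ r τ_i}], E[e^{−q₂ r τ_i}]))^{1/q} < ∞, where q := 1 if J_{F_A}^+ < 1 and q := q₂ if J_{F_A}^+ ≥ 1. -/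

import Mathlib

open MeasureTheory ProbabilityTheory Filter Topology Set
open scoped Pointwise ENNReal NNReal

noncomputable section

/-- The family `𝓡` of open increasing subsets of `ℝ^d` with convex complement,
whose closure avoids the origin. -/
def InRfam (d : ℕ) (A : Set (Fin d → ℝ)) : Prop :=
  IsOpen A ∧ (∀ x ∈ A, ∀ z : Fin d → ℝ, (∀ i, 0 ≤ z i) → x + z ∈ A) ∧
    Convex ℝ Aᶜ ∧ (0 : Fin d → ℝ) ∉ closure A

/-- The functional `z ↦ z_A = sup {u > 0 : z ∈ u • A}` (real `sSup`, so `sup ∅ = 0`). -/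
def projA {d : ℕ} (A : Set (Fin d → ℝ)) (z : Fin d → ℝ) : ℝ :=
  sSup {u : ℝ | 0 < u ∧ z ∈ u • A}

/-- The tail `Ḡ_A(x) = P(Z_A > x)` of the one-dimensional distribution `G_A`
associated with a distribution `G` on `ℝ^d` and a set `A ∈ 𝓡`. -/
def tailA {d : ℕ} (A : Set (Fin d → ℝ)) (G : Measure (Fin d → ℝ)) (x : ℝ) : ℝ :=
  (G {z | x < projA A z}).toReal

/-- Product of two measures (via `bind`, no instance assumptions). -/
def mprod {α β : Type*} [MeasurableSpace α] [MeasurableSpace β]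
    (μ : Measure α) (ν : Measure β) : Measure (α × β) :=
  μ.bind fun a => ν.map (Prod.mk a)

/-- Tail at `x` of `Z¹_A + Z²_A` for independent `Z¹ ∼ G₁`, `Z² ∼ G₂`. -/
def tail2A {d : ℕ} (A : Set (Fin d → ℝ)) (G₁ G₂ : Measure (Fin d → ℝ)) (x : ℝ) : ℝ :=
  ((mprod G₁ G₂) {p | x < projA A p.1 + projA A p.2}).toReal

/-- `G ∈ 𝒮_A`: the distribution `G_A` has everywhere positive tail and is
subexponential, i.e. `P(Z¹_A + Z²_A > x) ∼ 2 Ḡ_A(x)` for independent copies. -/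
def SubexpA {d : ℕ} (A : Set (Fin d → ℝ)) (G : Measure (Fin d → ℝ)) : Prop :=
  (∀ x : ℝ, 0 < tailA A G x) ∧
    Tendsto (fun x => tail2A A G G x / tailA A G x) atTop (𝓝 2)

/-- Convolution: the law of the sum of independent draws from `μ` and `ν`. -/
def mconv {d : ℕ} (μ ν : Measure (Fin d → ℝ)) : Measure (Fin d → ℝ) :=
  (mprod μ ν).map fun p => p.1 + p.2

/-- Regression dependence with explicit constants `x₀, K`, in integrated form:
for every index `i`, finite nonempty `J` not containing `i`, level `xi > x₀` and
measurable set `S` of conditioning values all `> x₀`,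
`P(Z_i > xi, (Z_j)_{j∈J} ∈ S) ≤ K · Ḡ_i(xi) · P((Z_j)_{j∈J} ∈ S)`. -/
def RDwith {Ω : Type*} [MeasurableSpace Ω] (P : Measure Ω) (x₀ K : ℝ)
    {ι : Type*} (Z : ι → Ω → ℝ) : Prop :=
  ∀ i : ι, ∀ J : Finset ι, J.Nonempty → i ∉ J → ∀ xi : ℝ, x₀ < xi →
    ∀ S : Set (J → ℝ), MeasurableSet S → (∀ v ∈ S, ∀ j : J, x₀ < v j) →
      (P {ω | xi < Z i ω ∧ (fun j : J => Z j.1 ω) ∈ S}).toReal ≤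
        K * (P {ω | xi < Z i ω}).toReal * (P {ω | (fun j : J => Z j.1 ω) ∈ S}).toReal

/-- Regression dependence (`RD`). -/
def RD {Ω : Type*} [MeasurableSpace Ω] (P : Measure Ω) {ι : Type*} (Z : ι → Ω → ℝ) : Prop :=
  ∃ x₀ > (0 : ℝ), ∃ K > (0 : ℝ), RDwith P x₀ K Z

/-- `RD_A` for random vectors: the projections `Z^{(i)}_A` are `RD`. -/
def RDA {Ω : Type*} [MeasurableSpace Ω] (P : Measure Ω) {d : ℕ} (A : Set (Fin d → ℝ))
    {ι : Type*} (Z : ι → Ω → Fin d → ℝ) : Prop :=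
  RD P fun i ω => projA A (Z i ω)

/-- Quasi asymptotic independence (`QAI`). -/
def QAI {Ω : Type*} [MeasurableSpace Ω] (P : Measure Ω) {ι : Type*} (Z : ι → Ω → ℝ) : Prop :=
  ∀ i j : ι, i ≠ j →
    Tendsto (fun x : ℝ => (P {ω | x < Z i ω ∧ x < Z j ω}).toReal /
      ((P {ω | x < Z i ω}).toReal + (P {ω | x < Z j ω}).toReal)) atTop (𝓝 0)

/-- `QAI_A` for random vectors: the projections `Z^{(i)}_A` are `QAI`. -/
def QAIA {Ω : Type*} [MeasurableSpace Ω] (P : Measure Ω) {d : ℕ} (A : Set (Fin d → ℝ))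
    {ι : Type*} (Z : ι → Ω → Fin d → ℝ) : Prop :=
  QAI P fun i ω => projA A (Z i ω)

/-- The consistent variation class `𝒞` for a tail function `g`. -/
def ClassC (g : ℝ → ℝ) : Prop :=
  Tendsto (fun b : ℝ => limsup (fun x => g (b * x) / g x) atTop) (𝓝[<] (1 : ℝ)) (𝓝 1)

/-- The positively decreasing class `𝒫_𝒟` for a tail function `g`. -/
def ClassPD (g : ℝ → ℝ) : Prop :=
  ∃ v > (1 : ℝ), limsup (fun x => g (v * x) / g x) atTop < 1

/-- Upper Matuszewska index of a tail function. -/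
def Jplus (g : ℝ → ℝ) : ℝ :=
  -limUnder atTop fun v : ℝ => Real.log (liminf (fun x => g (v * x) / g x) atTop) / Real.log v

/-- Lower Matuszewska index of a tail function. -/
def Jminus (g : ℝ → ℝ) : ℝ :=
  -limUnder atTop fun v : ℝ => Real.log (limsup (fun x => g (v * x) / g x) atTop) / Real.log v

/-- `F ∈ MRV(α, μ)` with associated regularly varying tail `Vbar`: `Vbar` is the
tail of a distribution on `ℝ`, regularly varying with index `−α`; `μ` is a nonzero
measure, finite on Borel sets at positive distance from the origin; and
`P(X ∈ x • B)/Vbar x → μ(B)` for all such `B` with `μ(∂B) = 0`. -/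
def IsMRV {d : ℕ} (F : Measure (Fin d → ℝ)) (α : ℝ) (μ : Measure (Fin d → ℝ))
    (Vbar : ℝ → ℝ) : Prop :=
  (∃ V : Measure ℝ, IsProbabilityMeasure V ∧ ∀ x : ℝ, Vbar x = (V (Ioi x)).toReal) ∧
    (∀ᶠ x in atTop, 0 < Vbar x) ∧
    (∀ t : ℝ, 0 < t → Tendsto (fun x => Vbar (t * x) / Vbar x) atTop (𝓝 (t ^ (-α)))) ∧
    μ ≠ 0 ∧
    (∀ B : Set (Fin d → ℝ), MeasurableSet B → (∃ ε > (0 : ℝ), ∀ z ∈ B, ε ≤ ‖z‖) → μ B ≠ ⊤) ∧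
    (∀ B : Set (Fin d → ℝ), MeasurableSet B → (∃ ε > (0 : ℝ), ∀ z ∈ B, ε ≤ ‖z‖) →
      μ (frontier B) = 0 →
      Tendsto (fun x => (F (x • B)).toReal / Vbar x) atTop (𝓝 ((μ B).toReal)))

/-- Second factorial moment measure `α⁽²⁾` of the point process with points `τ i`:
the mean measure of the off-diagonal pairs `(τ i, τ j)`, `i ≠ j`. -/
def secondFactorial {Ω : Type*} [MeasurableSpace Ω] (P : Measure Ω) (τ : ℕ → Ω → ℝ) :
    Measure (ℝ × ℝ) :=
  Measure.sum fun p : {p : ℕ × ℕ // p.1 ≠ p.2} =>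
    P.map fun ω => (τ p.1.1 ω, τ p.1.2 ω)

/-- The product measure `ν × ν`, where `ν(B) = ∑ᵢ P(τᵢ ∈ B)` is the mean measure. -/
def nuProd {Ω : Type*} [MeasurableSpace Ω] (P : Measure Ω) (τ : ℕ → Ω → ℝ) :
    Measure (ℝ × ℝ) :=
  Measure.sum fun p : ℕ × ℕ => mprod (P.map (τ p.1)) (P.map (τ p.2))

/-- Assumption 3.2 at horizon `T` with constant `C`:
`α⁽²⁾(B) ≤ C · (ν × ν)(B)` for every Borel `B ⊆ [0,T]²`. -/
def Assumption32 {Ω : Type*} [MeasurableSpace Ω] (P : Measure Ω) (τ : ℕ → Ω → ℝ)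
    (T C : ℝ) : Prop :=
  ∀ B : Set (ℝ × ℝ), MeasurableSet B → B ⊆ Icc (0 : ℝ) T ×ˢ Icc (0 : ℝ) T →
    secondFactorial P τ B ≤ ENNReal.ofReal C * nuProd P τ B

/-- Discounted aggregate claims up to a finite time `T`. -/
def Dfin {Ω : Type*} {d : ℕ} (r : ℝ) (X : ℕ → Ω → Fin d → ℝ) (τ : ℕ → Ω → ℝ)
    (T : ℝ) (ω : Ω) : Fin d → ℝ :=
  ∑' i : ℕ, Set.indicator {ω' | τ i ω' ≤ T} (fun ω' => Real.exp (-(r * τ i ω')) • X i ω') ω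

/-- Discounted aggregate claims over the infinite time horizon. -/
def Dinf {Ω : Type*} {d : ℕ} (r : ℝ) (X : ℕ → Ω → Fin d → ℝ) (τ : ℕ → Ω → ℝ)
    (ω : Ω) : Fin d → ℝ :=
  ∑' i : ℕ, Real.exp (-(r * τ i ω)) • X i ω

/-- `J_x(T)`: the number of discounted claims entering `x • A` by time `T`. -/
def Jcount {Ω : Type*} {d : ℕ} (r : ℝ) (X : ℕ → Ω → Fin d → ℝ) (τ : ℕ → Ω → ℝ)
    (A : Set (Fin d → ℝ)) (T x : ℝ) (ω : Ω) : ℝ≥0∞ :=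
  ∑' i : ℕ,
    Set.indicator {ω' | τ i ω' ≤ T ∧ Real.exp (-(r * τ i ω')) • X i ω' ∈ x • A}
      (fun _ => (1 : ℝ≥0∞)) ω

/-- Pathwise discounted stochastic integral `∫₀ᵗ e^{−rs} B(ds)
  = e^{−rt} B(t) + r ∫₀ᵗ e^{−rs} B(s) ds`. -/
def discBM {Ω : Type*} (r : ℝ) (Bi : ℝ → Ω → ℝ) (t : ℝ) (ω : Ω) : ℝ :=
  Real.exp (-(r * t)) * Bi t ω + r * ∫ s in (0 : ℝ)..t, Real.exp (-(r * s)) * Bi s ω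

/-- The insurer's surplus process `U(t)`. -/
def surplus {Ω : Type*} {d : ℕ} (r x : ℝ) (l : Fin d → ℝ) (c : Fin d → ℝ → Ω → ℝ)
    (δv : Fin d → ℝ) (Bm : Fin d → ℝ → Ω → ℝ) (X : ℕ → Ω → Fin d → ℝ) (τ : ℕ → Ω → ℝ)
    (t : ℝ) (ω : Ω) : Fin d → ℝ :=
  fun k => x * l k + (∫ s in (0 : ℝ)..t, Real.exp (-(r * s)) * c k s ω)
    + δv k * discBM r (Bm k) t ω - Dfin r X τ t ω k

lemma pow_step {s : ℝ → ℝ}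
    (hsuper : ∀ u v : ℝ, 1 ≤ u → 1 ≤ v → s u + s v ≤ s (u * v))
    {v : ℝ} (hv : 1 ≤ v) : ∀ n : ℕ, ((n : ℝ) + 1) * s v ≤ s (v ^ (n + 1)) := by
  intro n
  induction n with
  | zero => simp
  | succ n ih =>
    have h1 : s (v ^ (n + 1)) + s v ≤ s (v ^ (n + 1) * v) :=
      hsuper _ _ (one_le_pow₀ hv) hv
    calc ((n + 1 : ℕ) + 1 : ℝ) * s v = ((n : ℝ) + 1) * s v + s v := by push_cast; ring
      _ ≤ s (v ^ (n + 1)) + s v := by linarith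
      _ ≤ s (v ^ (n + 2)) := by rw [pow_succ]; exact h1

lemma pow_step' {s : ℝ → ℝ}
    (hsuper : ∀ u v : ℝ, 1 ≤ u → 1 ≤ v → s u + s v ≤ s (u * v))
    {v : ℝ} (hv : 1 ≤ v) {k : ℕ} (hk : 1 ≤ k) : (k : ℝ) * s v ≤ s (v ^ k) := by
  obtain ⟨n, rfl⟩ := Nat.exists_eq_add_of_le hk
  have h := pow_step hsuper hv n
  have e1 : ((1 + n : ℕ) : ℝ) = (n : ℝ) + 1 := by push_cast; ring
  rw [e1, add_comm 1 n]
  exact h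

lemma fekete_upper {s : ℝ → ℝ} {B : ℝ} (hB : 0 ≤ B)
    (hsuper : ∀ u v : ℝ, 1 ≤ u → 1 ≤ v → s u + s v ≤ s (u * v))
    (hbd : ∀ v : ℝ, 1 ≤ v → |s v| ≤ B * Real.log v + B)
    {v : ℝ} (hv : 1 < v) : s v / Real.log v ≤ B + B / Real.log 2 := by
  have hlv : 0 < Real.log v := Real.log_pos hv
  have hl2 : 0 < Real.log 2 := Real.log_pos (by norm_num)
  set k : ℕ := ⌈Real.log 2 / Real.log v⌉₊ with hkdef
  have hk1 : 1 ≤ k := Nat.one_le_ceil_iff.2 (by positivity)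
  have hklv : Real.log 2 ≤ (k : ℝ) * Real.log v := by
    have h := Nat.le_ceil (Real.log 2 / Real.log v)
    calc Real.log 2 = Real.log 2 / Real.log v * Real.log v := by field_simp
      _ ≤ (k : ℝ) * Real.log v := mul_le_mul_of_nonneg_right h hlv.le
  have hlogpow : Real.log (v ^ k) = (k : ℝ) * Real.log v := Real.log_pow v k
  have hlpk : 0 < Real.log (v ^ k) := by rw [hlogpow]; exact lt_of_lt_of_le hl2 hklv
  have hks : (k : ℝ) * s v ≤ s (v ^ k) := pow_step' hsuper hv.le hk1
  have hkpos : (0 : ℝ) < k := by exact_mod_cast hk1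
  have key : s v / Real.log v ≤ s (v ^ k) / Real.log (v ^ k) := by
    rw [hlogpow, show s v / Real.log v = ((k : ℝ) * s v) / ((k : ℝ) * Real.log v) from
      (mul_div_mul_left _ _ (ne_of_gt hkpos)).symm]
    exact div_le_div_of_nonneg_right hks (by positivity)
  refine key.trans ?_
  have hvk1 : (1 : ℝ) ≤ v ^ k := one_le_pow₀ hv.le
  have hsb : s (v ^ k) ≤ B * Real.log (v ^ k) + B := (le_abs_self _).trans (hbd _ hvk1)
  calc s (v ^ k) / Real.log (v ^ k) ≤ (B * Real.log (v ^ k) + B) / Real.log (v ^ k) :=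
        div_le_div_of_nonneg_right hsb hlpk.le
    _ = B + B / Real.log (v ^ k) := by field_simp
    _ ≤ B + B / Real.log 2 := by
        gcongr
        have h2 := Real.exp_le_exp.2 (hlogpow ▸ hklv : Real.log 2 ≤ Real.log (v ^ k))
        rwa [Real.exp_log (by norm_num : (0:ℝ) < 2), Real.exp_log (by positivity)] at h2

lemma fekete_mul {s : ℝ → ℝ} {B : ℝ} (hB : 0 ≤ B)
    (hsuper : ∀ u v : ℝ, 1 ≤ u → 1 ≤ v → s u + s v ≤ s (u * v))
    (hbd : ∀ v : ℝ, 1 ≤ v → |s v| ≤ B * Real.log v + B) :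
    ∃ L : ℝ, Tendsto (fun v => s v / Real.log v) atTop (𝓝 L) := by
  set φ : ℝ → ℝ := fun v => s v / Real.log v with hφ
  have hub : ∀ v : ℝ, 1 < v → φ v ≤ B + B / Real.log 2 := fun v hv =>
    fekete_upper hB hsuper hbd hv
  set Q : Set ℝ := φ '' Ioi 1 with hQ
  have hQne : Q.Nonempty := ⟨φ 2, ⟨2, by norm_num, rfl⟩⟩
  have hQbdd : BddAbove Q := ⟨B + B / Real.log 2, by rintro y ⟨v, hv, rfl⟩; exact hub v hv⟩
  set L := sSup Q with hL
  have hleL : ∀ v : ℝ, 1 < v → φ v ≤ L := fun v hv => le_csSup hQbdd ⟨v, hv, rfl⟩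
  refine ⟨L, ?_⟩
  rw [tendsto_order]
  constructor
  · intro a ha
    obtain ⟨y, ⟨w, (hw : 1 < w), rfl⟩, hay⟩ := exists_lt_of_lt_csSup hQne ha
    have hlw : 0 < Real.log w := Real.log_pos hw
    set C : ℝ := B * Real.log w + B with hC
    set b1 : ℕ → ℝ := fun k => ((k : ℝ) * s w - C) / ((k : ℝ) * Real.log w) with hb1
    set b2 : ℕ → ℝ := fun k => ((k : ℝ) * s w - C) / (((k : ℝ) + 1) * Real.log w) with hb2
    have haux1 : Tendsto (fun k : ℕ => 1 / ((k : ℝ) + 1)) atTop (𝓝 0) :=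
      tendsto_one_div_add_atTop_nhds_zero_nat
    have ht1 : Tendsto b1 atTop (𝓝 (φ w)) := by
      have h0 : Tendsto (fun k : ℕ => s w / Real.log w - (C / Real.log w) / k) atTop
          (𝓝 (s w / Real.log w - 0)) :=
        tendsto_const_nhds.sub (tendsto_const_div_atTop_nhds_zero_nat _)
      rw [sub_zero] at h0
      refine Tendsto.congr' ?_ h0
      filter_upwards [eventually_ge_atTop 1] with k hk
      have hkpos : (0 : ℝ) < k := by exact_mod_cast hk
      rw [hb1]
      field_simp
    have ht2 : Tendsto b2 atTop (𝓝 (φ w)) := by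
      have h0 : Tendsto (fun k : ℕ => (1 - 1 / ((k : ℝ) + 1)) * (s w / Real.log w)
          - (C / Real.log w) * (1 / ((k : ℝ) + 1))) atTop
          (𝓝 ((1 - 0) * (s w / Real.log w) - (C / Real.log w) * 0)) :=
        ((tendsto_const_nhds.sub haux1).mul tendsto_const_nhds).sub
          (tendsto_const_nhds.mul haux1)
      simp only [sub_zero, one_mul, mul_zero] at h0
      refine Tendsto.congr' ?_ h0
      filter_upwards with k
      have hk1 : (0 : ℝ) < (k : ℝ) + 1 := by positivity
      rw [hb2]
      field_simp
      ring
    have htmin : Tendsto (fun k => min (b1 k) (b2 k)) atTop (𝓝 (φ w)) := by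
      have h := ht1.min ht2
      simpa using h
    have hev : ∀ᶠ k in atTop, a < min (b1 k) (b2 k) :=
      htmin.eventually (eventually_gt_nhds hay)
    obtain ⟨k₀', hk₀⟩ := eventually_atTop.1 hev
    set k₀ : ℕ := max k₀' 1 with hk₀def
    have hk01 : 1 ≤ k₀ := le_max_right _ _
    have hwk0 : 1 < w ^ k₀ := one_lt_pow₀ hw (by omega)
    filter_upwards [eventually_ge_atTop (w ^ k₀)] with v hvge
    have hv1 : 1 < v := lt_of_lt_of_le hwk0 hvge
    have hv0 : (0 : ℝ) < v := by linarith
    have hlv : 0 < Real.log v := Real.log_pos hv1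
    set k : ℕ := ⌊Real.log v / Real.log w⌋₊ with hkdef
    have hratio0 : 0 ≤ Real.log v / Real.log w := by positivity
    have hlogvk0 : (k₀ : ℝ) * Real.log w ≤ Real.log v := by
      have h1 : Real.log (w ^ k₀) ≤ Real.log v := Real.log_le_log (by positivity) hvge
      rwa [Real.log_pow] at h1
    have hk0le : k₀ ≤ k := by
      apply Nat.le_floor
      rw [le_div_iff₀ hlw]
      exact hlogvk0
    have hk1 : 1 ≤ k := hk01.trans hk0le
    have hkR : (0 : ℝ) < (k : ℝ) := by exact_mod_cast hk1
    have hlow : (k : ℝ) * Real.log w ≤ Real.log v := by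
      have h1 : (k : ℝ) ≤ Real.log v / Real.log w := Nat.floor_le hratio0
      calc (k : ℝ) * Real.log w ≤ Real.log v / Real.log w * Real.log w :=
            mul_le_mul_of_nonneg_right h1 hlw.le
        _ = Real.log v := by field_simp
    have hup : Real.log v ≤ ((k : ℝ) + 1) * Real.log w := by
      have h1 : Real.log v / Real.log w < (k : ℝ) + 1 := Nat.lt_floor_add_one _
      have := mul_le_mul_of_nonneg_right h1.le hlw.le
      calc Real.log v = Real.log v / Real.log w * Real.log w := by field_simp
        _ ≤ ((k : ℝ) + 1) * Real.log w := this
    have hwkv : w ^ k ≤ v := by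
      have h2 : Real.log (w ^ k) ≤ Real.log v := by rw [Real.log_pow]; exact hlow
      have h3 := Real.exp_le_exp.2 h2
      rwa [Real.exp_log (by positivity), Real.exp_log hv0] at h3
    have hvwk : v ≤ w ^ (k + 1) := by
      have h2 : Real.log v ≤ Real.log (w ^ (k + 1)) := by
        rw [Real.log_pow]; push_cast; exact hup
      have h3 := Real.exp_le_exp.2 h2
      rwa [Real.exp_log hv0, Real.exp_log (by positivity)] at h3
    set t : ℝ := v / w ^ k with htdef
    have hwkpos : (0 : ℝ) < w ^ k := by positivity
    have ht1' : 1 ≤ t := (one_le_div hwkpos).2 hwkv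
    have htw : t ≤ w := by
      rw [htdef, div_le_iff₀ hwkpos]
      rw [pow_succ] at hvwk
      linarith [hvwk]
    have hst : s t + s (w ^ k) ≤ s v := by
      have h := hsuper t (w ^ k) ht1' (one_le_pow₀ hw.le)
      rwa [div_mul_cancel₀ _ (ne_of_gt hwkpos)] at h
    have hstb : -C ≤ s t := by
      have h1 := hbd t (by linarith)
      have h2 : Real.log t ≤ Real.log w := Real.log_le_log (by linarith) htw
      have h3 : B * Real.log t + B ≤ C := by rw [hC]; nlinarith
      have h4 := neg_abs_le (s t)
      linarith
    have hks : (k : ℝ) * s w ≤ s (w ^ k) := pow_step' hsuper hw.le hk1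
    have hN : (k : ℝ) * s w - C ≤ s v := by linarith
    set N : ℝ := (k : ℝ) * s w - C with hNdef
    have hmin : min (b1 k) (b2 k) ≤ N / Real.log v := by
      rcases le_or_gt 0 N with h | h
      · refine (min_le_right _ _).trans ?_
        exact div_le_div_of_nonneg_left h hlv hup
      · refine (min_le_left _ _).trans ?_
        rw [div_le_div_iff₀ (by positivity) hlv]
        exact mul_le_mul_of_nonpos_left hlow h.le
    have hak : a < min (b1 k) (b2 k) := hk₀ k (le_trans (le_max_left _ _) hk0le)
    have hfin : N / Real.log v ≤ φ v := div_le_div_of_nonneg_right hN hlv.le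
    calc a < min (b1 k) (b2 k) := hak
      _ ≤ N / Real.log v := hmin
      _ ≤ φ v := hfin
  · intro a ha
    filter_upwards [eventually_gt_atTop 1] with v hv
    exact lt_of_le_of_lt (hleL v hv) ha


section ratio

variable {g : ℝ → ℝ}

-- obtain the doubling constant from ClassC
lemma classC_doubling (hgpos : ∀ x, 0 < g x) (hC : ClassC g) :
    ∃ V : ℝ, 1 < V ∧ ∀ᶠ x in atTop, g x ≤ 2 * g (V * x) := by
  have h1 : ∀ᶠ b in 𝓝[<] (1:ℝ),
      limsup (fun x => g (b * x) / g x) atTop ∈ Ioo (1/2 : ℝ) (3/2) :=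
    hC (Ioo_mem_nhds (by norm_num) (by norm_num))
  have h2 : ∀ᶠ b in 𝓝[<] (1:ℝ), b ∈ Ioo (0:ℝ) 1 :=
    Ioo_mem_nhdsLT_of_mem (by constructor <;> norm_num)
  obtain ⟨b, hbL, hb01⟩ := (h1.and h2).exists
  set u : ℝ → ℝ := fun x => g (b * x) / g x with hu
  have hbdd : IsBoundedUnder (· ≤ ·) atTop u := by
    by_contra hc
    have hempty : {a : ℝ | ∀ᶠ x in atTop, u x ≤ a} = ∅ := by
      rw [eq_empty_iff_forall_notMem]
      intro a ha
      exact hc ⟨a, ha⟩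
    have : limsup u atTop = 0 := by
      rw [limsup_eq, hempty, Real.sInf_empty]
    rw [this] at hbL
    exact absurd hbL.1 (by norm_num)
  have hev : ∀ᶠ x in atTop, u x < 2 :=
    eventually_lt_of_limsup_lt (lt_of_lt_of_le hbL.2 (by norm_num)) hbdd
  refine ⟨b⁻¹, ?_, ?_⟩
  · exact (one_lt_inv₀ hb01.1).2 hb01.2
  · have hmul : Tendsto (fun y : ℝ => b⁻¹ * y) atTop atTop :=
      Tendsto.const_mul_atTop (inv_pos.2 hb01.1) tendsto_id
    filter_upwards [hmul.eventually hev] with y hy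
    have hb0 : b ≠ 0 := ne_of_gt hb01.1
    rw [hu] at hy
    simp only [← mul_assoc, mul_inv_cancel₀ hb0, one_mul] at hy
    have := (div_lt_iff₀ (hgpos (b⁻¹ * y))).1 hy
    linarith

lemma iterate_doubling {V : ℝ} (hV : 1 < V)
    (hdb : ∀ᶠ x in atTop, g x ≤ 2 * g (V * x)) :
    ∀ n : ℕ, ∀ᶠ x in atTop, g x ≤ 2 ^ n * g (V ^ n * x) := by
  intro n
  induction n with
  | zero => simp
  | succ n ih =>
    have hVn : (0:ℝ) < V ^ n := by positivity
    have hmul : Tendsto (fun y : ℝ => V ^ n * y) atTop atTop :=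
      Tendsto.const_mul_atTop hVn tendsto_id
    filter_upwards [ih, hmul.eventually hdb] with x h1 h2
    have h3 : (2:ℝ) ^ n * g (V ^ n * x) ≤ 2 ^ n * (2 * g (V * (V ^ n * x))) :=
      mul_le_mul_of_nonneg_left h2 (by positivity)
    have h4 : V * (V ^ n * x) = V ^ (n + 1) * x := by ring
    calc g x ≤ 2 ^ n * g (V ^ n * x) := h1
      _ ≤ 2 ^ n * (2 * g (V * (V ^ n * x))) := h3
      _ = 2 ^ (n+1) * g (V ^ (n+1) * x) := by rw [h4]; ring
end ratio


lemma jindex_facts {g : ℝ → ℝ} (hgpos : ∀ x, 0 < g x) (hganti : Antitone g)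
    (hC : ClassC g) : Jminus g ≤ Jplus g ∧ ∃ c : ℝ, Jplus g ≤ c := by
  obtain ⟨V, hV, hdb⟩ := classC_doubling hgpos hC
  have hiter := iterate_doubling hV hdb
  have hlV : 0 < Real.log V := Real.log_pos hV
  have hl2 : 0 < Real.log 2 := Real.log_pos (by norm_num)
  set n : ℝ → ℕ := fun v => ⌈Real.log v / Real.log V⌉₊ with hndef
  set hm : ℝ → ℝ := fun v => limsup (fun x => g (v * x) / g x) atTop with hmdef
  set hp : ℝ → ℝ := fun v => liminf (fun x => g (v * x) / g x) atTop with hpdef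
  have hvpow : ∀ v : ℝ, 1 ≤ v → v ≤ V ^ (n v) := by
    intro v hv
    have hle := Nat.le_ceil (Real.log v / Real.log V)
    have h1 : Real.log v ≤ (n v : ℝ) * Real.log V := by
      calc Real.log v = Real.log v / Real.log V * Real.log V := by field_simp
        _ ≤ (n v : ℝ) * Real.log V := mul_le_mul_of_nonneg_right hle hlV.le
    have h2 : Real.log v ≤ Real.log (V ^ (n v)) := by rw [Real.log_pow]; exact h1
    have h3 := Real.exp_le_exp.2 h2
    rwa [Real.exp_log (by linarith), Real.exp_log (by positivity)] at h3
  have hub : ∀ v : ℝ, 1 ≤ v → ∀ᶠ x in atTop, g (v * x) / g x ≤ 1 := by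
    intro v hv
    filter_upwards [eventually_ge_atTop 0] with x hx
    have h1 : g (v * x) ≤ g x := hganti (by nlinarith)
    rw [div_le_one (hgpos x)]; exact h1
  have hlb : ∀ v : ℝ, 1 ≤ v → ∀ᶠ x in atTop, ((2:ℝ) ^ (n v))⁻¹ ≤ g (v * x) / g x := by
    intro v hv
    filter_upwards [hiter (n v), eventually_ge_atTop 0] with x h1 hx
    have h2 : g (V ^ (n v) * x) ≤ g (v * x) :=
      hganti (mul_le_mul_of_nonneg_right (hvpow v hv) hx)
    have h3 : g x ≤ 2 ^ (n v) * g (v * x) :=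
      le_trans h1 (mul_le_mul_of_nonneg_left h2 (by positivity))
    rw [le_div_iff₀ (hgpos x), inv_mul_le_iff₀ (by positivity)]
    exact h3
  have hbd_le : ∀ v : ℝ, 1 ≤ v → IsBoundedUnder (· ≤ ·) atTop (fun x => g (v * x) / g x) :=
    fun v hv => ⟨1, eventually_map.2 (hub v hv)⟩
  have hbd_ge : ∀ v : ℝ, IsBoundedUnder (· ≥ ·) atTop (fun x => g (v * x) / g x) :=
    fun v => ⟨0, eventually_map.2 (Eventually.of_forall fun x => div_nonneg (hgpos _).le (hgpos _).le)⟩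
  have hm_le_one : ∀ v : ℝ, 1 ≤ v → hm v ≤ 1 :=
    fun v hv => limsup_le_of_le ((hbd_ge v).isCoboundedUnder_le) (hub v hv)
  have hp_lb : ∀ v : ℝ, 1 ≤ v → ((2:ℝ) ^ (n v))⁻¹ ≤ hp v :=
    fun v hv => le_liminf_of_le ((hbd_le v hv).isCoboundedUnder_ge) (hlb v hv)
  have hp_pos : ∀ v : ℝ, 1 ≤ v → 0 < hp v :=
    fun v hv => lt_of_lt_of_le (by positivity) (hp_lb v hv)
  have hple : ∀ v : ℝ, 1 ≤ v → hp v ≤ hm v :=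
    fun v hv => liminf_le_limsup (hbd_le v hv) (hbd_ge v)
  have hm_pos : ∀ v : ℝ, 1 ≤ v → 0 < hm v :=
    fun v hv => lt_of_lt_of_le (hp_pos v hv) (hple v hv)
  -- submultiplicativity of hm
  have hm_submul : ∀ u v : ℝ, 1 ≤ u → 1 ≤ v → hm (u * v) ≤ hm u * hm v := by
    intro u v hu hv
    have key : ∀ ε : ℝ, 0 < ε → hm (u * v) ≤ (hm u + ε) * (hm v + ε) := by
      intro ε hε
      have e1 : ∀ᶠ y in atTop, g (u * y) / g y < hm u + ε :=
        eventually_lt_of_limsup_lt (lt_add_of_pos_right _ hε) (hbd_le u hu)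
      have e2 : ∀ᶠ x in atTop, g (v * x) / g x < hm v + ε :=
        eventually_lt_of_limsup_lt (lt_add_of_pos_right _ hε) (hbd_le v hv)
      have hmul : Tendsto (fun x : ℝ => v * x) atTop atTop :=
        Tendsto.const_mul_atTop (by linarith) tendsto_id
      refine limsup_le_of_le ((hbd_ge (u * v)).isCoboundedUnder_le) ?_
      filter_upwards [hmul.eventually e1, e2] with x h1 h2
      have hgx := hgpos x
      have hgvx := hgpos (v * x)
      have heq : g (u * v * x) / g x = (g (u * (v * x)) / g (v * x)) * (g (v * x) / g x) := by
        rw [mul_assoc]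
        field_simp
      have hprod : (g (u * (v * x)) / g (v * x)) * (g (v * x) / g x)
          < (hm u + ε) * (hm v + ε) :=
        mul_lt_mul'' h1 h2 (div_nonneg (hgpos _).le (hgpos _).le) (div_nonneg (hgpos _).le (hgpos _).le)
      rw [heq]
      exact hprod.le
    have htd : Tendsto (fun ε : ℝ => (hm u + ε) * (hm v + ε)) (𝓝[>] 0)
        (𝓝 (hm u * hm v)) := by
      have hcont : Tendsto (fun ε : ℝ => (hm u + ε) * (hm v + ε)) (𝓝 0)
          (𝓝 ((hm u + 0) * (hm v + 0))) :=
        ((tendsto_const_nhds.add tendsto_id).mul (tendsto_const_nhds.add tendsto_id))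
      simpa using hcont.mono_left nhdsWithin_le_nhds
    exact ge_of_tendsto htd (eventually_nhdsWithin_of_forall fun ε hε => key ε hε)
  -- supermultiplicativity of hp
  have hp_supmul : ∀ u v : ℝ, 1 ≤ u → 1 ≤ v → hp u * hp v ≤ hp (u * v) := by
    intro u v hu hv
    have huv : (1:ℝ) ≤ u * v := by nlinarith
    have key : ∀ ε : ℝ, 0 < ε → ε < hp u → ε < hp v →
        (hp u - ε) * (hp v - ε) ≤ hp (u * v) := by
      intro ε hε hεu hεv
      have e1 : ∀ᶠ y in atTop, hp u - ε < g (u * y) / g y :=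
        eventually_lt_of_lt_liminf (by linarith) (hbd_ge u)
      have e2 : ∀ᶠ x in atTop, hp v - ε < g (v * x) / g x :=
        eventually_lt_of_lt_liminf (by linarith) (hbd_ge v)
      have hmul : Tendsto (fun x : ℝ => v * x) atTop atTop :=
        Tendsto.const_mul_atTop (by linarith) tendsto_id
      refine le_liminf_of_le ((hbd_le (u * v) huv).isCoboundedUnder_ge) ?_
      filter_upwards [hmul.eventually e1, e2] with x h1 h2
      have hgx := hgpos x
      have hgvx := hgpos (v * x)
      have heq : g (u * v * x) / g x = (g (u * (v * x)) / g (v * x)) * (g (v * x) / g x) := by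
        rw [mul_assoc]
        field_simp
      have hprod : (hp u - ε) * (hp v - ε)
          < (g (u * (v * x)) / g (v * x)) * (g (v * x) / g x) :=
        mul_lt_mul'' h1 h2 (by linarith) (by linarith)
      rw [heq]
      exact hprod.le
    have htd : Tendsto (fun ε : ℝ => (hp u - ε) * (hp v - ε)) (𝓝[>] 0)
        (𝓝 (hp u * hp v)) := by
      have hcont : Tendsto (fun ε : ℝ => (hp u - ε) * (hp v - ε)) (𝓝 0)
          (𝓝 ((hp u - 0) * (hp v - 0))) :=
        ((tendsto_const_nhds.sub tendsto_id).mul (tendsto_const_nhds.sub tendsto_id))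
      simpa using hcont.mono_left nhdsWithin_le_nhds
    refine le_of_tendsto htd ?_
    have hmin : (0:ℝ) < min (hp u) (hp v) := lt_min (hp_pos u hu) (hp_pos v hv)
    filter_upwards [Ioo_mem_nhdsGT_of_mem
      (⟨le_refl (0:ℝ), hmin⟩ : (0:ℝ) ∈ Ico (0:ℝ) (min (hp u) (hp v)))] with ε hε
    exact key ε hε.1 (lt_of_lt_of_le hε.2 (min_le_left _ _))
      (lt_of_lt_of_le hε.2 (min_le_right _ _))
  -- logarithmic bounds
  set B : ℝ := Real.log 2 / Real.log V + Real.log 2 with hBdef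
  have hBpos : 0 < B := by positivity
  clear_value B
  have hnlog : ∀ v : ℝ, 1 ≤ v → (n v : ℝ) * Real.log 2 ≤ B * Real.log v + B := by
    intro v hv
    have hlv0 : 0 ≤ Real.log v := Real.log_nonneg hv
    have h0 : 0 ≤ Real.log v / Real.log V := div_nonneg hlv0 hlV.le
    have h1 : (n v : ℝ) < Real.log v / Real.log V + 1 := Nat.ceil_lt_add_one h0
    have h2 : (n v : ℝ) * Real.log 2 ≤ (Real.log v / Real.log V + 1) * Real.log 2 :=
      mul_le_mul_of_nonneg_right h1.le hl2.le
    have h3 : (Real.log v / Real.log V + 1) * Real.log 2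
        = Real.log 2 / Real.log V * Real.log v + Real.log 2 := by
      field_simp
    have h4 : 0 ≤ Real.log 2 / Real.log V := div_nonneg hl2.le hlV.le
    have h5 : B * Real.log v + B = (Real.log 2 / Real.log V * Real.log v + Real.log 2)
        + (Real.log 2 * Real.log v + Real.log 2 / Real.log V) := by rw [hBdef]; ring
    have h6 : 0 ≤ Real.log 2 * Real.log v := mul_nonneg hl2.le hlv0
    linarith
  have hlogbound : ∀ q : ℝ → ℝ, (∀ v : ℝ, 1 ≤ v → hp v ≤ q v) →
      (∀ v : ℝ, 1 ≤ v → q v ≤ 1) → ∀ v : ℝ, 1 ≤ v →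
      |Real.log (q v)| ≤ B * Real.log v + B := by
    intro q hq1 hq2 v hv
    have hqpos : 0 < q v := lt_of_lt_of_le (hp_pos v hv) (hq1 v hv)
    have hqle : Real.log (q v) ≤ 0 := Real.log_nonpos hqpos.le (hq2 v hv)
    have hlow : -((n v : ℝ) * Real.log 2) ≤ Real.log (q v) := by
      have h1 : Real.log (((2:ℝ) ^ (n v))⁻¹) ≤ Real.log (q v) :=
        Real.log_le_log (by positivity) (le_trans (hp_lb v hv) (hq1 v hv))
      rwa [Real.log_inv, Real.log_pow] at h1
    rw [abs_of_nonpos hqle]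
    have := hnlog v hv
    linarith
  -- fekete applications
  obtain ⟨Lm, hLm⟩ := fekete_mul hBpos.le
    (fun u v hu hv => by
      have h1 := Real.log_le_log (hm_pos (u * v) (by nlinarith)) (hm_submul u v hu hv)
      rw [Real.log_mul (ne_of_gt (hm_pos u hu)) (ne_of_gt (hm_pos v hv))] at h1
      show -Real.log (hm u) + -Real.log (hm v) ≤ -Real.log (hm (u * v))
      linarith)
    (fun v hv => by
      rw [abs_neg]
      exact hlogbound hm hple hm_le_one v hv)
    (s := fun v => -Real.log (hm v))
  obtain ⟨Mp, hMp⟩ := fekete_mul hBpos.le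
    (fun u v hu hv => by
      have h1 := Real.log_le_log (mul_pos (hp_pos u hu) (hp_pos v hv)) (hp_supmul u v hu hv)
      rw [Real.log_mul (ne_of_gt (hp_pos u hu)) (ne_of_gt (hp_pos v hv))] at h1
      show Real.log (hp u) + Real.log (hp v) ≤ Real.log (hp (u * v))
      linarith)
    (fun v hv => hlogbound hp (fun _ _ => le_refl _)
      (fun v hv => le_trans (hple v hv) (hm_le_one v hv)) v hv)
    (s := fun v => Real.log (hp v))
  -- identify the limits with the indices
  have hφm : Tendsto (fun v => Real.log (hm v) / Real.log v) atTop (𝓝 (-Lm)) := by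
    have h := hLm.neg
    simp only [neg_div, neg_neg] at h
    exact h
  have hJm : Jminus g = Lm := by
    have h1 : Jminus g = -limUnder atTop (fun v => Real.log (hm v) / Real.log v) := rfl
    rw [h1, hφm.limUnder_eq, neg_neg]
  have hJp : Jplus g = -Mp := by
    have h1 : Jplus g = -limUnder atTop (fun v => Real.log (hp v) / Real.log v) := rfl
    rw [h1, hMp.limUnder_eq]
  constructor
  · -- Jminus ≤ Jplus
    rw [hJm, hJp]
    have hcomp : Mp ≤ -Lm := by
      refine le_of_tendsto_of_tendsto hMp hφm ?_
      filter_upwards [eventually_ge_atTop (1:ℝ)] with v hv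
      have h1 : Real.log (hp v) ≤ Real.log (hm v) :=
        Real.log_le_log (hp_pos v hv) (hple v hv)
      exact div_le_div_of_nonneg_right h1 (Real.log_nonneg hv)
    linarith
  · -- upper bound for Jplus
    refine ⟨B + B / Real.log 2, ?_⟩
    rw [hJp]
    have hlow : -(B + B / Real.log 2) ≤ Mp := by
      refine ge_of_tendsto hMp ?_
      filter_upwards [eventually_ge_atTop (2:ℝ)] with v hv
      have hv1 : (1:ℝ) ≤ v := by linarith
      have hlv : 0 < Real.log v := Real.log_pos (by linarith)
      have h1 : -(B * Real.log v + B) ≤ Real.log (hp v) := by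
        have := hlogbound hp (fun _ _ => le_refl _)
          (fun v hv => le_trans (hple v hv) (hm_le_one v hv)) v hv1
        have h2 := neg_abs_le (Real.log (hp v))
        linarith
      have h2 : -(B + B / Real.log v) ≤ Real.log (hp v) / Real.log v := by
        have h3 := div_le_div_of_nonneg_right h1 hlv.le
        have h4 : -(B * Real.log v + B) / Real.log v = -(B + B / Real.log v) := by
          field_simp
        rwa [h4] at h3
      have h5 : B / Real.log v ≤ B / Real.log 2 := by
        apply div_le_div_of_nonneg_left hBpos.le hl2
        exact Real.log_le_log (by norm_num) hv
      linarith
    linarith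


-- telescoping over Icc
lemma tele_sum (E : ℕ → ℝ) : ∀ m K : ℕ, m ≤ K →
    ∑ k ∈ Finset.Icc m K, (E k - E (k + 1)) = E m - E (K + 1) := by
  intro m K hmK
  induction K, hmK using Nat.le_induction with
  | base => simp
  | succ K hmK ih =>
    rw [Finset.sum_Icc_succ_top (by omega), ih]
    ring

-- product expansion bound
lemma prod_add_le (m : ℕ) (A : ℕ → ℝ) (hA0 : ∀ j, 0 ≤ A j) (hA1 : ∀ j, A j ≤ 1)
    {ε : ℝ} (hε : 0 ≤ ε) :
    ∏ j ∈ Finset.range m, (A j + ε) ≤ ∏ j ∈ Finset.range m, A j + ((1 + ε) ^ m - 1) := by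
  induction m with
  | zero => simp
  | succ m ih =>
    rw [Finset.prod_range_succ, Finset.prod_range_succ]
    have hP0 : 0 ≤ ∏ j ∈ Finset.range m, A j := Finset.prod_nonneg fun j _ => hA0 j
    have hP1 : ∏ j ∈ Finset.range m, A j ≤ 1 :=
      Finset.prod_le_one (fun j _ => hA0 j) (fun j _ => hA1 j)
    have hE1 : (1:ℝ) ≤ (1 + ε) ^ m := one_le_pow₀ (by linarith)
    have h1 : (∏ j ∈ Finset.range m, (A j + ε)) * (A m + ε)
        ≤ (∏ j ∈ Finset.range m, A j + ((1 + ε) ^ m - 1)) * (A m + ε) :=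
      mul_le_mul_of_nonneg_right ih (by linarith [hA0 m])
    refine h1.trans ?_
    have hAm0 := hA0 m
    have hAm1 := hA1 m
    have hexp : (1 + ε) ^ (m + 1) = (1 + ε) ^ m * (1 + ε) := pow_succ _ _
    nlinarith [mul_nonneg hP0 hAm0, mul_nonneg (sub_nonneg.2 hE1) (sub_nonneg.2 hAm1),
      mul_nonneg (sub_nonneg.2 hP1) hε]

def Efn (c h : ℝ) (k : ℕ) : ℝ := Real.exp (-(c * (k * h)))
def wfn (c h : ℝ) (k : ℕ) : ℝ := Efn c h k - Efn c h (k + 1)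
def FKfn (c h : ℝ) (K : ℕ) (y : ℝ) : ℝ :=
  ∑ k ∈ Finset.range (K + 1), wfn c h k * (if y ≤ k * h then 1 else 0)

section FKlemmas
variable {c h : ℝ} (hc : 0 < c) (hh : 0 < h)
include hc hh

lemma wfn_tele (m K : ℕ) (hmK : m ≤ K) :
    ∑ k ∈ Finset.Icc m K, wfn c h k = Efn c h m - Efn c h (K + 1) := by
  simp only [wfn]
  exact tele_sum (Efn c h) m K hmK

lemma wfn_nonneg (k : ℕ) : 0 ≤ wfn c h k := by
  have : -(c * ((k+1 : ℕ) * h)) ≤ -(c * (k * h)) := by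
    push_cast
    nlinarith [hc.le, hh.le]
  exact sub_nonneg.2 (Real.exp_le_exp.2 this)

lemma Efn_pos (k : ℕ) : 0 < Efn c h k := Real.exp_pos _

lemma FKfn_nonneg (K : ℕ) (y : ℝ) : 0 ≤ FKfn c h K y :=
  Finset.sum_nonneg fun k _ => mul_nonneg (wfn_nonneg hc hh k) (by positivity)

lemma FKfn_eval_le {K : ℕ} {y : ℝ} (hy : 0 ≤ y) (hmK : ⌈y / h⌉₊ ≤ K) :
    FKfn c h K y = Efn c h ⌈y / h⌉₊ - Efn c h (K + 1) := by
  set m := ⌈y / h⌉₊ with hm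
  have step1 : ∑ k ∈ Finset.Icc m K, wfn c h k * (if y ≤ k * h then 1 else 0)
      = ∑ k ∈ Finset.Icc m K, wfn c h k := by
    refine Finset.sum_congr rfl fun k hk => ?_
    have hkm : m ≤ k := (Finset.mem_Icc.1 hk).1
    have hym : y ≤ (m : ℝ) * h := by
      have h1 : y / h ≤ (m : ℝ) := Nat.le_ceil _
      calc y = y / h * h := (div_mul_cancel₀ y (ne_of_gt hh)).symm
        _ ≤ (m : ℝ) * h := mul_le_mul_of_nonneg_right h1 hh.le
    have : y ≤ (k : ℝ) * h :=
      hym.trans (mul_le_mul_of_nonneg_right (by exact_mod_cast hkm) hh.le)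
    rw [if_pos this, mul_one]
  have step2 : FKfn c h K y = ∑ k ∈ Finset.Icc m K, wfn c h k * (if y ≤ k * h then 1 else 0) := by
    rw [FKfn]
    refine (Finset.sum_subset ?_ ?_).symm
    · intro k hk
      simp only [Finset.mem_Icc] at hk
      simp only [Finset.mem_range]
      omega
    · intro k hk1 hk2
      simp only [Finset.mem_range] at hk1
      simp only [Finset.mem_Icc] at hk2
      have hkm : k < m := by omega
      have : (k : ℝ) * h < y := by
        have h1 : (k : ℝ) < y / h := (Nat.lt_ceil).1 hkm
        calc (k : ℝ) * h < y / h * h := mul_lt_mul_of_pos_right h1 hh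
          _ = y := div_mul_cancel₀ y (ne_of_gt hh)
      rw [if_neg (not_le.2 this), mul_zero]
  rw [step2, step1, wfn_tele hc hh m K hmK]

lemma FKfn_eval_gt {K : ℕ} {y : ℝ} (hmK : K < ⌈y / h⌉₊) : FKfn c h K y = 0 := by
  apply Finset.sum_eq_zero
  intro k hk
  simp only [Finset.mem_range] at hk
  have hkm : k < ⌈y / h⌉₊ := by omega
  have : (k : ℝ) * h < y := by
    have h1 : (k : ℝ) < y / h := (Nat.lt_ceil).1 hkm
    calc (k : ℝ) * h < y / h * h := mul_lt_mul_of_pos_right h1 hh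
      _ = y := by field_simp
  rw [if_neg (not_le.2 this), mul_zero]

lemma FKfn_le_one (K : ℕ) (y : ℝ) : FKfn c h K y ≤ 1 := by
  have h1 : FKfn c h K y ≤ ∑ k ∈ Finset.range (K + 1), wfn c h k := by
    refine Finset.sum_le_sum fun k _ => ?_
    have := wfn_nonneg (c := c) (h := h) hc hh k
    split <;> simp <;> linarith
  have h2 : ∑ k ∈ Finset.range (K + 1), wfn c h k = Efn c h 0 - Efn c h (K + 1) := by
    have : Finset.range (K + 1) = Finset.Icc 0 K := by
      ext k; simp [Nat.lt_succ_iff]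
    rw [this, wfn_tele hc hh 0 K (Nat.zero_le _)]
  have h3 : Efn c h 0 = 1 := by simp [Efn]
  have h4 : 0 < Efn c h (K + 1) := Efn_pos hc hh _
  rw [h2, h3] at h1
  linarith

lemma FKfn_le_exp (K : ℕ) {y : ℝ} (hy : 0 ≤ y) : FKfn c h K y ≤ Real.exp (-(c * y)) := by
  rcases le_or_gt ⌈y / h⌉₊ K with hmK | hmK
  · rw [FKfn_eval_le hc hh hy hmK]
    have hym : y ≤ (⌈y / h⌉₊ : ℝ) * h := by
      have h1 : y / h ≤ (⌈y / h⌉₊ : ℝ) := Nat.le_ceil _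
      calc y = y / h * h := (div_mul_cancel₀ y (ne_of_gt hh)).symm
        _ ≤ _ := mul_le_mul_of_nonneg_right h1 hh.le
    have h1 : Efn c h ⌈y / h⌉₊ ≤ Real.exp (-(c * y)) := by
      apply Real.exp_le_exp.2
      nlinarith [hc.le]
    have h2 := Efn_pos hc hh (K + 1)
    linarith
  · rw [FKfn_eval_gt hc hh hmK]
    positivity

lemma exp_le_FKfn (K : ℕ) {y : ℝ} (hy : 0 ≤ y) :
    Real.exp (-(c * y)) ≤ Real.exp (c * h) * (FKfn c h K y + Efn c h (K + 1)) := by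
  have hceil : (⌈y / h⌉₊ : ℝ) < y / h + 1 := Nat.ceil_lt_add_one (div_nonneg hy hh.le)
  have hmh : (⌈y / h⌉₊ : ℝ) * h < y + h := by
    have := mul_lt_mul_of_pos_right hceil hh
    calc (⌈y / h⌉₊ : ℝ) * h < (y / h + 1) * h := mul_lt_mul_of_pos_right hceil hh
      _ = y + h := by field_simp
  rcases le_or_gt ⌈y / h⌉₊ K with hmK | hmK
  · rw [FKfn_eval_le hc hh hy hmK]
    have h1 : Real.exp (-(c * y)) ≤ Real.exp (c * h) * Efn c h ⌈y / h⌉₊ := by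
      rw [Efn, ← Real.exp_add]
      apply Real.exp_le_exp.2
      nlinarith [hc.le]
    calc Real.exp (-(c * y)) ≤ Real.exp (c * h) * Efn c h ⌈y / h⌉₊ := h1
      _ = Real.exp (c * h) * (Efn c h ⌈y / h⌉₊ - Efn c h (K + 1) + Efn c h (K + 1)) := by ring
  · have hKy : (K : ℝ) * h < y := by
      have h1 : (K : ℝ) < y / h := (Nat.lt_ceil).1 hmK
      calc (K : ℝ) * h < y / h * h := mul_lt_mul_of_pos_right h1 hh
        _ = y := div_mul_cancel₀ y (ne_of_gt hh)
    have h1 : Real.exp (-(c * y)) ≤ Real.exp (c * h) * Efn c h (K + 1) := by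
      rw [Efn, ← Real.exp_add]
      apply Real.exp_le_exp.2
      push_cast
      nlinarith [hc.le]
    have h2 : Real.exp (c * h) * Efn c h (K + 1)
        ≤ Real.exp (c * h) * (FKfn c h K y + Efn c h (K + 1)) := by
      have := FKfn_nonneg (c := c) (h := h) hc hh K y
      have hexp : (0:ℝ) ≤ Real.exp (c * h) := (Real.exp_pos _).le
      nlinarith
    linarith

end FKlemmas

set_option maxHeartbeats 2000000 in
lemma wlod_moment {Ω : Type*} [MeasurableSpace Ω] (P : Measure Ω) [IsProbabilityMeasure P]
    (θ : ℕ → Ω → ℝ) (hθmeas : ∀ i, Measurable (θ i)) (hθnn : ∀ i ω, 0 ≤ θ i ω)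
    (hθid : ∀ i, P.map (θ i) = P.map (θ 0))
    (gL : ℕ → ℝ) (hgL : ∀ n, 0 < gL n)
    (hWLOD : ∀ n : ℕ, ∀ x : Fin n → ℝ,
      (P {ω | ∀ i : Fin n, θ i.1 ω ≤ x i}).toReal ≤
        gL n * ∏ i : Fin n, (P {ω | θ i.1 ω ≤ x i}).toReal)
    {c h : ℝ} (hc : 0 < c) (hh : 0 < h) (n : ℕ) :
    ∫ ω, Real.exp (-(c * ∑ j ∈ Finset.range n, θ j ω)) ∂P ≤
      Real.exp (c * h * n) * (gL n * (∫ ω, Real.exp (-(c * θ 0 ω)) ∂P) ^ n) := by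
  set a : ℝ := ∫ ω, Real.exp (-(c * θ 0 ω)) ∂P with ha
  -- identical distribution of marginals
  have hsame : ∀ j : ℕ, ∀ t : ℝ, P {ω | θ j ω ≤ t} = P {ω | θ 0 ω ≤ t} := by
    intro j t
    have h1 : P {ω | θ j ω ≤ t} = (P.map (θ j)) (Iic t) := by
      rw [Measure.map_apply (hθmeas j) measurableSet_Iic]; rfl
    have h2 : P {ω | θ 0 ω ≤ t} = (P.map (θ 0)) (Iic t) := by
      rw [Measure.map_apply (hθmeas 0) measurableSet_Iic]; rfl
    rw [h1, h2, hθid j]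
  -- basic measurability / integrability
  have hSmeas : Measurable fun ω => ∑ j ∈ Finset.range n, θ j ω :=
    Finset.measurable_sum _ fun j _ => hθmeas j
  have hSnn : ∀ ω, 0 ≤ ∑ j ∈ Finset.range n, θ j ω :=
    fun ω => Finset.sum_nonneg fun j _ => hθnn j ω
  have hexpSint : Integrable (fun ω => Real.exp (-(c * ∑ j ∈ Finset.range n, θ j ω))) P := by
    refine Integrable.mono' (integrable_const 1)
      ((hSmeas.const_mul c).neg.exp).aestronglyMeasurable (ae_of_all _ fun ω => ?_)
    rw [Real.norm_eq_abs, abs_of_pos (Real.exp_pos _)]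
    exact Real.exp_le_one_iff.2 (neg_nonpos.2 (mul_nonneg hc.le (hSnn ω)))
  have haint : Integrable (fun ω => Real.exp (-(c * θ 0 ω))) P := by
    refine Integrable.mono' (integrable_const 1)
      (((hθmeas 0).const_mul c).neg.exp).aestronglyMeasurable (ae_of_all _ fun ω => ?_)
    rw [Real.norm_eq_abs, abs_of_pos (Real.exp_pos _)]
    exact Real.exp_le_one_iff.2 (neg_nonpos.2 (mul_nonneg hc.le (hθnn 0 ω)))
  have hFKmeas : ∀ (K j : ℕ), Measurable fun ω => FKfn c h K (θ j ω) := by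
    intro K j
    apply Finset.measurable_sum
    intro k _
    exact measurable_const.mul
      (Measurable.ite (measurableSet_le (hθmeas j) measurable_const)
        measurable_const measurable_const)
  have hFKint : ∀ (K j : ℕ), Integrable (fun ω => FKfn c h K (θ j ω)) P := by
    intro K j
    refine Integrable.mono' (integrable_const 1)
      (hFKmeas K j).aestronglyMeasurable (ae_of_all _ fun ω => ?_)
    rw [Real.norm_eq_abs, abs_of_nonneg (FKfn_nonneg hc hh K _)]
    exact FKfn_le_one hc hh K _
  -- measurable events
  have hEvMeas : ∀ (x : Fin n → ℝ), MeasurableSet {ω | ∀ j : Fin n, θ j.1 ω ≤ x j} := by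
    intro x
    have heq : {ω | ∀ j : Fin n, θ j.1 ω ≤ x j} = ⋂ j : Fin n, {ω | θ j.1 ω ≤ x j} := by
      ext ω; simp
    rw [heq]
    exact MeasurableSet.iInter fun j => measurableSet_le (hθmeas j.1) measurable_const
  -- integral of a single FK
  have hiteint : ∀ (j k : ℕ) (C : ℝ),
      Integrable (fun ω => C * (if θ j ω ≤ (k:ℝ) * h then (1:ℝ) else 0)) P := by
    intro j k C
    have heq : (fun ω => C * (if θ j ω ≤ (k:ℝ) * h then (1:ℝ) else 0))
        = fun ω => Set.indicator {ω | θ j ω ≤ (k:ℝ) * h} (fun _ => C) ω := by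
      funext ω; simp only [Set.indicator_apply, Set.mem_setOf_eq]; split <;> simp
    rw [heq]
    exact (integrable_const C).indicator (measurableSet_le (hθmeas j) measurable_const)
  have hite_eval : ∀ (j k : ℕ) (C : ℝ),
      ∫ ω, C * (if θ j ω ≤ (k:ℝ) * h then (1:ℝ) else 0) ∂P
        = C * (P {ω | θ j ω ≤ (k:ℝ) * h}).toReal := by
    intro j k C
    rw [integral_const_mul _ _]
    congr 1
    have heq : (fun ω => if θ j ω ≤ (k:ℝ) * h then (1:ℝ) else 0)
        = fun ω => Set.indicator {ω | θ j ω ≤ (k:ℝ) * h} (fun _ => (1:ℝ)) ω := by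
      funext ω; simp only [Set.indicator_apply, Set.mem_setOf_eq]
    rw [heq, integral_indicator_const _ (measurableSet_le (hθmeas j) measurable_const)]
    simp [Measure.real]
  have hFK_eval : ∀ (K j : ℕ), ∫ ω, FKfn c h K (θ j ω) ∂P
      = ∑ k ∈ Finset.range (K + 1), wfn c h k * (P {ω | θ 0 ω ≤ (k:ℝ) * h}).toReal := by
    intro K j
    have heq : (fun ω => FKfn c h K (θ j ω))
        = fun ω => ∑ k ∈ Finset.range (K + 1),
            wfn c h k * (if θ j ω ≤ (k:ℝ) * h then (1:ℝ) else 0) := rfl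
    rw [heq, integral_finset_sum _ (fun k _ => hiteint j k _)]
    refine Finset.sum_congr rfl fun k _ => ?_
    rw [hite_eval j k _, hsame j]
  set bK : ℕ → ℝ := fun K => ∑ k ∈ Finset.range (K + 1),
      wfn c h k * (P {ω | θ 0 ω ≤ (k:ℝ) * h}).toReal with hbKdef
  have hbK_nonneg : ∀ K, 0 ≤ bK K :=
    fun K => Finset.sum_nonneg fun k _ =>
      mul_nonneg (wfn_nonneg hc hh k) ENNReal.toReal_nonneg
  have hbK_le_a : ∀ K, bK K ≤ a := by
    intro K
    have h1 : bK K = ∫ ω, FKfn c h K (θ 0 ω) ∂P := (hFK_eval K 0).symm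
    rw [h1, ha]
    exact integral_mono (hFKint K 0) haint fun ω => FKfn_le_exp hc hh K (hθnn 0 ω)
  have ha_nonneg : 0 ≤ a := hbK_nonneg 0 |>.trans (hbK_le_a 0)
  -- product integral bound
  have hprodFK : ∀ K : ℕ, ∫ ω, ∏ j ∈ Finset.range n, FKfn c h K (θ j ω) ∂P
      ≤ gL n * (bK K) ^ n := by
    intro K
    have hpoint : ∀ ω, ∏ j ∈ Finset.range n, FKfn c h K (θ j ω)
        = ∑ p ∈ Fintype.piFinset (fun _ : Fin n => Finset.range (K + 1)),
            (∏ j : Fin n, wfn c h (p j)) *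
              (if ∀ j : Fin n, θ j.1 ω ≤ (p j : ℝ) * h then (1:ℝ) else 0) := by
      intro ω
      rw [← Fin.prod_univ_eq_prod_range (fun j => FKfn c h K (θ j ω)) n]
      rw [show (∏ j : Fin n, FKfn c h K (θ j.1 ω))
          = ∏ j : Fin n, ∑ k ∈ Finset.range (K + 1),
              wfn c h k * (if θ j.1 ω ≤ (k:ℝ) * h then (1:ℝ) else 0) from rfl]
      rw [Finset.prod_univ_sum]
      refine Finset.sum_congr rfl fun p _ => ?_
      rw [Finset.prod_mul_distrib]
      congr 1
      rw [Finset.prod_boole]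
      simp
    have hintp : ∀ p : Fin n → ℕ, Integrable (fun ω =>
        (∏ j : Fin n, wfn c h (p j)) *
          (if ∀ j : Fin n, θ j.1 ω ≤ (p j : ℝ) * h then (1:ℝ) else 0)) P := by
      intro p
      have heq : (fun ω => (∏ j : Fin n, wfn c h (p j)) *
          (if ∀ j : Fin n, θ j.1 ω ≤ (p j : ℝ) * h then (1:ℝ) else 0))
          = fun ω => Set.indicator {ω | ∀ j : Fin n, θ j.1 ω ≤ (p j : ℝ) * h}
              (fun _ => ∏ j : Fin n, wfn c h (p j)) ω := by
        funext ω; simp only [Set.indicator_apply, Set.mem_setOf_eq]; split <;> simp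
      rw [heq]
      exact (integrable_const _).indicator (hEvMeas _)
    have hstep : ∫ ω, ∏ j ∈ Finset.range n, FKfn c h K (θ j ω) ∂P
        = ∑ p ∈ Fintype.piFinset (fun _ : Fin n => Finset.range (K + 1)),
            (∏ j : Fin n, wfn c h (p j)) *
              (P {ω | ∀ j : Fin n, θ j.1 ω ≤ (p j : ℝ) * h}).toReal := by
      rw [show (fun ω => ∏ j ∈ Finset.range n, FKfn c h K (θ j ω))
          = fun ω => ∑ p ∈ Fintype.piFinset (fun _ : Fin n => Finset.range (K + 1)),
              (∏ j : Fin n, wfn c h (p j)) *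
                (if ∀ j : Fin n, θ j.1 ω ≤ (p j : ℝ) * h then (1:ℝ) else 0)
          from funext hpoint]
      rw [integral_finset_sum _ (fun p _ => hintp p)]
      refine Finset.sum_congr rfl fun p _ => ?_
      rw [integral_const_mul _ _]
      congr 1
      have heq : (fun ω => if ∀ j : Fin n, θ j.1 ω ≤ (p j : ℝ) * h then (1:ℝ) else 0)
          = fun ω => Set.indicator {ω | ∀ j : Fin n, θ j.1 ω ≤ (p j : ℝ) * h}
              (fun _ => (1:ℝ)) ω := by
        funext ω; simp only [Set.indicator_apply, Set.mem_setOf_eq]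
      rw [heq, integral_indicator_const _ (hEvMeas _)]
      simp [Measure.real]
    rw [hstep]
    have hwp_nonneg : ∀ p : Fin n → ℕ, 0 ≤ ∏ j : Fin n, wfn c h (p j) :=
      fun p => Finset.prod_nonneg fun j _ => wfn_nonneg hc hh _
    calc ∑ p ∈ Fintype.piFinset (fun _ : Fin n => Finset.range (K + 1)),
          (∏ j : Fin n, wfn c h (p j)) *
            (P {ω | ∀ j : Fin n, θ j.1 ω ≤ (p j : ℝ) * h}).toReal
        ≤ ∑ p ∈ Fintype.piFinset (fun _ : Fin n => Finset.range (K + 1)),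
            (∏ j : Fin n, wfn c h (p j)) *
              (gL n * ∏ j : Fin n, (P {ω | θ j.1 ω ≤ (p j : ℝ) * h}).toReal) := by
          refine Finset.sum_le_sum fun p _ => ?_
          refine mul_le_mul_of_nonneg_left ?_ (hwp_nonneg p)
          have := hWLOD n (fun j => (p j : ℝ) * h)
          simpa using this
      _ = gL n * ∑ p ∈ Fintype.piFinset (fun _ : Fin n => Finset.range (K + 1)),
            ∏ j : Fin n, (wfn c h (p j) * (P {ω | θ 0 ω ≤ (p j : ℝ) * h}).toReal) := by
          rw [Finset.mul_sum]
          refine Finset.sum_congr rfl fun p _ => ?_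
          rw [Finset.prod_mul_distrib]
          have hrw : ∏ j : Fin n, (P {ω | θ j.1 ω ≤ (p j : ℝ) * h}).toReal
              = ∏ j : Fin n, (P {ω | θ 0 ω ≤ (p j : ℝ) * h}).toReal :=
            Finset.prod_congr rfl fun j _ => by rw [hsame j.1]
          rw [hrw]
          ring
      _ = gL n * (bK K) ^ n := by
          congr 1
          have hps := Finset.prod_univ_sum (fun _ : Fin n => Finset.range (K + 1))
            (fun (_ : Fin n) (k : ℕ) => wfn c h k * (P {ω | θ 0 ω ≤ (k:ℝ) * h}).toReal)
          rw [← hps, Finset.prod_const, Finset.card_univ, Fintype.card_fin]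
  -- pointwise main bound, for each K
  have hmain : ∀ K : ℕ, ∫ ω, Real.exp (-(c * ∑ j ∈ Finset.range n, θ j ω)) ∂P
      ≤ Real.exp (c * h * n) * (gL n * a ^ n + ((1 + Efn c h (K + 1)) ^ n - 1)) := by
    intro K
    have hprodint : Integrable (fun ω => ∏ j ∈ Finset.range n, FKfn c h K (θ j ω)) P := by
      refine Integrable.mono' (integrable_const 1)
        (Finset.measurable_prod _ fun j _ => hFKmeas K j).aestronglyMeasurable
        (ae_of_all _ fun ω => ?_)
      rw [Real.norm_eq_abs,
        abs_of_nonneg (Finset.prod_nonneg fun j _ => FKfn_nonneg hc hh K _)]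
      exact Finset.prod_le_one (fun j _ => FKfn_nonneg hc hh K _)
        (fun j _ => FKfn_le_one hc hh K _)
    have hEpos := Efn_pos (c := c) (h := h) hc hh (K + 1)
    have hle : ∀ ω, Real.exp (-(c * ∑ j ∈ Finset.range n, θ j ω))
        ≤ Real.exp (c * h * n) *
          ((∏ j ∈ Finset.range n, FKfn c h K (θ j ω)) + ((1 + Efn c h (K + 1)) ^ n - 1)) := by
      intro ω
      have h1 : Real.exp (-(c * ∑ j ∈ Finset.range n, θ j ω))
          = ∏ j ∈ Finset.range n, Real.exp (-(c * θ j ω)) := by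
        rw [← Real.exp_sum]
        congr 1
        rw [Finset.mul_sum, ← Finset.sum_neg_distrib]
      have h2 : ∏ j ∈ Finset.range n, Real.exp (-(c * θ j ω))
          ≤ ∏ j ∈ Finset.range n,
              (Real.exp (c * h) * (FKfn c h K (θ j ω) + Efn c h (K + 1))) :=
        Finset.prod_le_prod (fun j _ => (Real.exp_pos _).le)
          (fun j _ => exp_le_FKfn hc hh K (hθnn j ω))
      have h3 : ∏ j ∈ Finset.range n,
            (Real.exp (c * h) * (FKfn c h K (θ j ω) + Efn c h (K + 1)))
          = Real.exp (c * h * n) *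
              ∏ j ∈ Finset.range n, (FKfn c h K (θ j ω) + Efn c h (K + 1)) := by
        rw [Finset.prod_mul_distrib, Finset.prod_const, Finset.card_range,
          ← Real.exp_nat_mul]
        congr 2
        ring
      have h4 : ∏ j ∈ Finset.range n, (FKfn c h K (θ j ω) + Efn c h (K + 1))
          ≤ ∏ j ∈ Finset.range n, FKfn c h K (θ j ω) + ((1 + Efn c h (K + 1)) ^ n - 1) :=
        prod_add_le n (fun j => FKfn c h K (θ j ω))
          (fun j => FKfn_nonneg hc hh K _) (fun j => FKfn_le_one hc hh K _) hEpos.le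
      calc Real.exp (-(c * ∑ j ∈ Finset.range n, θ j ω))
          = ∏ j ∈ Finset.range n, Real.exp (-(c * θ j ω)) := h1
        _ ≤ ∏ j ∈ Finset.range n,
              (Real.exp (c * h) * (FKfn c h K (θ j ω) + Efn c h (K + 1))) := h2
        _ = Real.exp (c * h * n) *
              ∏ j ∈ Finset.range n, (FKfn c h K (θ j ω) + Efn c h (K + 1)) := h3
        _ ≤ _ := mul_le_mul_of_nonneg_left h4 (Real.exp_pos _).le
    have hRHSint : Integrable (fun ω => Real.exp (c * h * n) *
        ((∏ j ∈ Finset.range n, FKfn c h K (θ j ω)) + ((1 + Efn c h (K + 1)) ^ n - 1))) P :=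
      ((hprodint.add (integrable_const _)).const_mul _)
    calc ∫ ω, Real.exp (-(c * ∑ j ∈ Finset.range n, θ j ω)) ∂P
        ≤ ∫ ω, Real.exp (c * h * n) *
            ((∏ j ∈ Finset.range n, FKfn c h K (θ j ω))
              + ((1 + Efn c h (K + 1)) ^ n - 1)) ∂P :=
          integral_mono hexpSint hRHSint hle
      _ = Real.exp (c * h * n) *
            ((∫ ω, ∏ j ∈ Finset.range n, FKfn c h K (θ j ω) ∂P)
              + ((1 + Efn c h (K + 1)) ^ n - 1)) := by
          rw [integral_const_mul _ _, integral_add hprodint (integrable_const _), integral_const]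
          simp
      _ ≤ Real.exp (c * h * n) *
            (gL n * a ^ n + ((1 + Efn c h (K + 1)) ^ n - 1)) := by
          refine mul_le_mul_of_nonneg_left ?_ (Real.exp_pos _).le
          have h5 : gL n * (bK K) ^ n ≤ gL n * a ^ n :=
            mul_le_mul_of_nonneg_left
              (pow_le_pow_left₀ (hbK_nonneg K) (hbK_le_a K) n) (hgL n).le
          linarith [hprodFK K]
  -- let K → ∞
  have hεtend : Tendsto (fun K : ℕ => Efn c h (K + 1)) atTop (𝓝 0) := by
    have h1 : Tendsto (fun K : ℕ => ((K : ℝ) + 1) * (c * h)) atTop atTop :=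
      (tendsto_atTop_add_const_right atTop 1 tendsto_natCast_atTop_atTop).atTop_mul_const
        (by positivity)
    have h2 := (Real.tendsto_exp_atBot).comp (tendsto_neg_atTop_atBot.comp h1)
    refine h2.congr fun K => ?_
    show Real.exp (-(((K : ℝ) + 1) * (c * h))) = Efn c h (K + 1)
    rw [Efn]
    exact congrArg Real.exp (by push_cast; ring)
  have hRtend : Tendsto (fun K : ℕ => Real.exp (c * h * n) *
      (gL n * a ^ n + ((1 + Efn c h (K + 1)) ^ n - 1))) atTop
      (𝓝 (Real.exp (c * h * n) * (gL n * a ^ n))) := by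
    have h1 : Tendsto (fun K : ℕ =>
        gL n * a ^ n + ((1 + Efn c h (K + 1)) ^ n - 1)) atTop
        (𝓝 (gL n * a ^ n + ((1 + 0) ^ n - 1))) :=
      tendsto_const_nhds.add (((tendsto_const_nhds.add hεtend).pow n).sub tendsto_const_nhds)
    have h2 := h1.const_mul (Real.exp (c * h * n))
    simpa using h2
  exact ge_of_tendsto hRtend (Eventually.of_forall hmain)


/-- Example 3.1: identically distributed, widely lower orthant dependent (WLOD)
inter-arrival times with `limsup g_L(n) e^{−δn} < ∞` for some
`δ ∈ (0, −log E[e^{−r J⁻_{F_A} θ₁}])` satisfy Assumption 3.1. -/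
theorem statement10
    {Ω : Type*} [MeasurableSpace Ω] (P : Measure Ω) [IsProbabilityMeasure P]
    {d : ℕ} (hd : 1 ≤ d) {A : Set (Fin d → ℝ)} (hA : InRfam d A)
    {r : ℝ} (hr : 0 < r)
    (F : Measure (Fin d → ℝ)) [IsProbabilityMeasure F]
    (hFpos : ∀ x : ℝ, 0 < tailA A F x)
    (hFC : ClassC (tailA A F)) (hFPD : ClassPD (tailA A F))
    (θ : ℕ → Ω → ℝ) (hθmeas : ∀ i, Measurable (θ i))
    (hθnn : ∀ i ω, 0 ≤ θ i ω)
    (hθid : ∀ i, P.map (θ i) = P.map (θ 0))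
    (hθ0 : 0 < P {ω | 0 < θ 0 ω})
    (gL : ℕ → ℝ) (hgL : ∀ n, 0 < gL n)
    (hWLOD : ∀ n : ℕ, ∀ x : Fin n → ℝ,
      (P {ω | ∀ i : Fin n, θ i.1 ω ≤ x i}).toReal ≤
        gL n * ∏ i : Fin n, (P {ω | θ i.1 ω ≤ x i}).toReal)
    {δ : ℝ} (hδ0 : 0 < δ)
    (hδ : δ < -Real.log (∫ ω, Real.exp (-(r * Jminus (tailA A F) * θ 0 ω)) ∂P))
    (hglim : IsBoundedUnder (· ≤ ·) atTop (fun n : ℕ => gL n * Real.exp (-(δ * n)))) :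
    ∃ q₁ q₂ : ℝ, 0 < q₁ ∧ q₁ < Jminus (tailA A F) ∧
      Jminus (tailA A F) ≤ Jplus (tailA A F) ∧ Jplus (tailA A F) < q₂ ∧
      Summable (fun i : ℕ =>
        (max (∫ ω, Real.exp (-(q₁ * (r * ∑ j ∈ Finset.range (i + 1), θ j ω))) ∂P)
            (∫ ω, Real.exp (-(q₂ * (r * ∑ j ∈ Finset.range (i + 1), θ j ω))) ∂P)) ^
          ((1 : ℝ) / (if Jplus (tailA A F) < 1 then 1 else q₂))) := by
  have hganti : Antitone (tailA A F) := by
    intro x y hxy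
    refine ENNReal.toReal_mono (measure_ne_top F _) (measure_mono fun z hz => ?_)
    exact lt_of_le_of_lt hxy hz
  obtain ⟨hJle, c₀, hJple⟩ := jindex_facts hFpos hganti hFC
  set g : ℝ → ℝ := tailA A F with hgdef
  set L : ℝ := Jminus g with hLdef
  set lap : ℝ → ℝ := fun q => ∫ ω, Real.exp (-(q * (r * θ 0 ω))) ∂P with hlapdef
  have hlapL : lap L = ∫ ω, Real.exp (-(r * Jminus (tailA A F) * θ 0 ω)) ∂P := by
    rw [hlapdef]
    refine congrArg _ (funext fun ω => congrArg Real.exp ?_)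
    rw [hLdef, hgdef]
    ring
  have hδ' : δ < -Real.log (lap L) := by rw [hlapL]; exact hδ
  have hlapmeas : ∀ q : ℝ, Measurable fun ω => Real.exp (-(q * (r * θ 0 ω))) := by
    intro q
    exact (((hθmeas 0).const_mul r).const_mul q).neg.exp
  have hlapint : ∀ q : ℝ, 0 ≤ q → Integrable (fun ω => Real.exp (-(q * (r * θ 0 ω)))) P := by
    intro q hq
    refine Integrable.mono' (integrable_const 1) (hlapmeas q).aestronglyMeasurable
      (ae_of_all _ fun ω => ?_)
    rw [Real.norm_eq_abs, abs_of_pos (Real.exp_pos _)]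
    exact Real.exp_le_one_iff.2 (neg_nonpos.2 (mul_nonneg hq (mul_nonneg hr.le (hθnn 0 ω))))
  have hlap_lt : lap L < Real.exp (-δ) := by
    rcases le_or_gt (lap L) 0 with h0 | h0
    · exact lt_of_le_of_lt h0 (Real.exp_pos _)
    · have h1 : Real.log (lap L) < -δ := by linarith
      calc lap L = Real.exp (Real.log (lap L)) := (Real.exp_log h0).symm
        _ < Real.exp (-δ) := Real.exp_lt_exp.2 h1
  have hLpos : 0 < L := by
    by_contra hL0
    push_neg at hL0
    have hbad : -Real.log (lap L) ≤ 0 := by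
      rcases em (Integrable (fun ω => Real.exp (-(L * (r * θ 0 ω)))) P) with hi | hi
      · have h1 : ∀ ω, (1:ℝ) ≤ Real.exp (-(L * (r * θ 0 ω))) := by
          intro ω
          rw [← Real.exp_zero]
          apply Real.exp_le_exp.2
          have h5 := hθnn 0 ω
          nlinarith [mul_nonneg (neg_nonneg.2 hL0) (mul_nonneg hr.le h5)]
        have h2 : (1:ℝ) ≤ lap L := by
          have h3 : (1:ℝ) = ∫ _ω, (1:ℝ) ∂P := by simp
          rw [hlapdef]
          rw [h3]
          exact integral_mono (integrable_const 1) hi h1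
        have := Real.log_nonneg h2
        linarith
      · have h2 : lap L = 0 := integral_undef hi
        rw [h2]
        simp
    linarith
  -- choose q₁ < L with lap q₁ < exp (-δ)
  have hqs_tend : Tendsto (fun m : ℕ => L - L / ((m:ℝ) + 2)) atTop (𝓝 L) := by
    have h1 : Tendsto (fun m : ℕ => ((m:ℝ) + 2)) atTop atTop :=
      tendsto_atTop_add_const_right atTop 2 tendsto_natCast_atTop_atTop
    have h2 : Tendsto (fun m : ℕ => L / ((m:ℝ) + 2)) atTop (𝓝 0) :=
      Tendsto.div_atTop tendsto_const_nhds h1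
    have h3 := (tendsto_const_nhds (x := L)).sub h2
    simpa using h3
  have hqs_pos : ∀ m : ℕ, 0 < L - L / ((m:ℝ) + 2) := by
    intro m
    have h1 : L / ((m:ℝ) + 2) < L := by
      apply div_lt_self hLpos
      have : (0:ℝ) ≤ (m:ℝ) := Nat.cast_nonneg m
      linarith
    linarith
  have hqs_lt : ∀ m : ℕ, L - L / ((m:ℝ) + 2) < L := by
    intro m
    have : 0 < L / ((m:ℝ) + 2) := by positivity
    linarith
  have hint_tend : Tendsto (fun m : ℕ => lap (L - L / ((m:ℝ) + 2))) atTop (𝓝 (lap L)) := by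
    rw [hlapdef]
    refine tendsto_integral_of_dominated_convergence (fun _ => (1:ℝ))
      (fun m => (hlapmeas _).aestronglyMeasurable) (integrable_const 1)
      (fun m => ae_of_all _ fun ω => ?_) (ae_of_all _ fun ω => ?_)
    · rw [Real.norm_eq_abs, abs_of_pos (Real.exp_pos _)]
      exact Real.exp_le_one_iff.2 (neg_nonpos.2
        (mul_nonneg (hqs_pos m).le (mul_nonneg hr.le (hθnn 0 ω))))
    · have hcont : Continuous fun p : ℝ => Real.exp (-(p * (r * θ 0 ω))) :=
        Real.continuous_exp.comp ((continuous_id.mul continuous_const).neg)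
      exact (hcont.tendsto L).comp hqs_tend
  have hev : ∀ᶠ m : ℕ in atTop, lap (L - L / ((m:ℝ) + 2)) < Real.exp (-δ) :=
    hint_tend.eventually_lt_const hlap_lt
  obtain ⟨m₀, hm₀⟩ := hev.exists
  set q₁ : ℝ := L - L / ((m₀:ℝ) + 2) with hq₁def
  have hq₁pos : 0 < q₁ := hqs_pos m₀
  have hq₁lt : q₁ < L := hqs_lt m₀
  have hq₁lap : lap q₁ < Real.exp (-δ) := hm₀
  -- choose q₂
  set q₂ : ℝ := max c₀ q₁ + 1 with hq₂def
  have hq₁q₂ : q₁ ≤ q₂ := by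
    have := le_max_right c₀ q₁
    linarith
  have hq₂pos : 0 < q₂ := lt_of_lt_of_le hq₁pos hq₁q₂
  have hJpq₂ : Jplus g < q₂ := by
    refine lt_of_le_of_lt hJple ?_
    have := le_max_left c₀ q₁
    linarith
  -- uniform bound on gL n * exp (-(δ n))
  obtain ⟨Kb, hKb⟩ := hglim
  obtain ⟨N, hN⟩ := eventually_atTop.1 (eventually_map.1 hKb)
  set K' : ℝ := Kb + ∑ m ∈ Finset.range (N + 1), gL m * Real.exp (-(δ * m)) with hK'def
  have htermpos : ∀ m : ℕ, 0 < gL m * Real.exp (-(δ * m)) :=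
    fun m => mul_pos (hgL m) (Real.exp_pos _)
  have hK'bound : ∀ n : ℕ, gL n * Real.exp (-(δ * n)) ≤ K' := by
    intro n
    rcases le_or_gt N n with hn | hn
    · have h1 := hN n hn
      have h2 : 0 ≤ ∑ m ∈ Finset.range (N + 1), gL m * Real.exp (-(δ * m)) :=
        Finset.sum_nonneg fun m _ => (htermpos m).le
      rw [hK'def]
      linarith
    · have h1 : gL n * Real.exp (-(δ * n))
          ≤ ∑ m ∈ Finset.range (N + 1), gL m * Real.exp (-(δ * m)) :=
        Finset.single_le_sum (fun m _ => (htermpos m).le) (Finset.mem_range.2 (by omega))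
      have h2 : 0 ≤ Kb := le_trans (htermpos N).le (hN N le_rfl)
      rw [hK'def]
      linarith
  have hK'pos : 0 < K' := lt_of_lt_of_le (htermpos 0) (hK'bound 0)
  -- step size
  have hlapq₁pos : 0 < lap q₁ := by
    rw [hlapdef]
    refine (integral_pos_iff_support_of_nonneg (fun ω => (Real.exp_pos _).le)
      (hlapint q₁ hq₁pos.le)).2 ?_
    have hsupp : (Function.support fun ω => Real.exp (-(q₁ * (r * θ 0 ω)))) = univ := by
      ext ω; simp [Function.mem_support, (Real.exp_pos _).ne']
    rw [hsupp]
    simp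
  set ρ : ℝ := Real.exp δ * lap q₁ with hρdef
  have hρpos : 0 < ρ := mul_pos (Real.exp_pos _) hlapq₁pos
  have hρlt1 : ρ < 1 := by
    calc ρ = Real.exp δ * lap q₁ := rfl
      _ < Real.exp δ * Real.exp (-δ) := mul_lt_mul_of_pos_left hq₁lap (Real.exp_pos _)
      _ = 1 := by rw [← Real.exp_add]; simp
  set c : ℝ := q₁ * r with hcdef
  have hcpos : 0 < c := mul_pos hq₁pos hr
  set hstep : ℝ := -Real.log ρ / (2 * c) with hstepdef
  have hlogρneg : Real.log ρ < 0 := Real.log_neg hρpos hρlt1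
  have hsteppos : 0 < hstep := div_pos (by linarith) (by positivity)
  set σ : ℝ := Real.exp (c * hstep) * ρ with hσdef
  have hσpos : 0 < σ := mul_pos (Real.exp_pos _) hρpos
  have hσlt1 : σ < 1 := by
    have h1 : c * hstep = -Real.log ρ / 2 := by
      rw [hstepdef]
      field_simp
    calc σ = Real.exp (-Real.log ρ / 2) * ρ := by rw [hσdef, h1]
      _ = Real.exp (-Real.log ρ / 2) * Real.exp (Real.log ρ) := by rw [Real.exp_log hρpos]
      _ = Real.exp (Real.log ρ / 2) := by rw [← Real.exp_add]; congr 1; ring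
      _ < 1 := Real.exp_lt_one_iff.2 (by linarith)
  -- the per-index bound
  have hlap_eq : (∫ ω, Real.exp (-(c * θ 0 ω)) ∂P) = lap q₁ := by
    rw [hlapdef]
    exact congrArg _ (funext fun ω => congrArg Real.exp (by rw [hcdef]; ring))
  have hIbound : ∀ i : ℕ,
      ∫ ω, Real.exp (-(q₁ * (r * ∑ j ∈ Finset.range (i + 1), θ j ω))) ∂P
        ≤ K' * σ ^ (i + 1) := by
    intro i
    have h1 := wlod_moment P θ hθmeas hθnn hθid gL hgL hWLOD hcpos hsteppos (i + 1)
    have heqf : (fun ω => Real.exp (-(q₁ * (r * ∑ j ∈ Finset.range (i + 1), θ j ω))))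
        = fun ω => Real.exp (-(c * ∑ j ∈ Finset.range (i + 1), θ j ω)) :=
      funext fun ω => congrArg Real.exp (by rw [hcdef]; ring)
    rw [heqf]
    refine h1.trans ?_
    rw [hlap_eq]
    set n : ℕ := i + 1
    have h2 : gL n ≤ K' * Real.exp (δ * n) := by
      have h3 := hK'bound n
      calc gL n = gL n * Real.exp (-(δ * n)) * Real.exp (δ * n) := by
            rw [mul_assoc, ← Real.exp_add]; simp
        _ ≤ K' * Real.exp (δ * n) := mul_le_mul_of_nonneg_right h3 (Real.exp_pos _).le
    have e1 : Real.exp (c * hstep * n) = Real.exp (c * hstep) ^ n := by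
      rw [← Real.exp_nat_mul]; ring_nf
    have e2 : Real.exp (δ * n) = Real.exp δ ^ n := by
      rw [← Real.exp_nat_mul]; ring_nf
    calc Real.exp (c * hstep * n) * (gL n * lap q₁ ^ n)
        ≤ Real.exp (c * hstep * n) * (K' * Real.exp (δ * n) * lap q₁ ^ n) := by
          refine mul_le_mul_of_nonneg_left ?_ (Real.exp_pos _).le
          exact mul_le_mul_of_nonneg_right h2 (pow_nonneg hlapq₁pos.le n)
      _ = K' * σ ^ n := by
          rw [hσdef, hρdef, e1, e2, mul_pow, mul_pow]
          ring
  -- integrability of objective integrands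
  have hSmeas : ∀ i : ℕ, Measurable fun ω => ∑ j ∈ Finset.range (i + 1), θ j ω :=
    fun i => Finset.measurable_sum _ fun j _ => hθmeas j
  have hSnn : ∀ (i : ℕ) ω, 0 ≤ ∑ j ∈ Finset.range (i + 1), θ j ω :=
    fun i ω => Finset.sum_nonneg fun j _ => hθnn j ω
  have hIint : ∀ (p : ℝ), 0 ≤ p → ∀ i : ℕ,
      Integrable (fun ω => Real.exp (-(p * (r * ∑ j ∈ Finset.range (i + 1), θ j ω)))) P := by
    intro p hp i
    refine Integrable.mono' (integrable_const 1)
      ((((hSmeas i).const_mul r).const_mul p).neg.exp).aestronglyMeasurable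
      (ae_of_all _ fun ω => ?_)
    rw [Real.norm_eq_abs, abs_of_pos (Real.exp_pos _)]
    exact Real.exp_le_one_iff.2 (neg_nonpos.2 (mul_nonneg hp (mul_nonneg hr.le (hSnn i ω))))
  have hmax : ∀ i : ℕ,
      max (∫ ω, Real.exp (-(q₁ * (r * ∑ j ∈ Finset.range (i + 1), θ j ω))) ∂P)
          (∫ ω, Real.exp (-(q₂ * (r * ∑ j ∈ Finset.range (i + 1), θ j ω))) ∂P)
        = ∫ ω, Real.exp (-(q₁ * (r * ∑ j ∈ Finset.range (i + 1), θ j ω))) ∂P := by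
    intro i
    refine max_eq_left (integral_mono (hIint q₂ hq₂pos.le i) (hIint q₁ hq₁pos.le i)
      fun ω => ?_)
    apply Real.exp_le_exp.2
    have h1 : 0 ≤ r * ∑ j ∈ Finset.range (i + 1), θ j ω := mul_nonneg hr.le (hSnn i ω)
    nlinarith
  refine ⟨q₁, q₂, hq₁pos, hq₁lt, hJle, hJpq₂, ?_⟩
  set q : ℝ := if Jplus g < 1 then 1 else q₂ with hqdef
  have hqpos : 0 < q := by
    rw [hqdef]
    split_ifs
    · norm_num
    · exact hq₂pos
  have hexppos : 0 < (1:ℝ) / q := by positivity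
  set σ' : ℝ := σ ^ ((1:ℝ) / q) with hσ'def
  have hσ'pos : 0 < σ' := Real.rpow_pos_of_pos hσpos _
  have hσ'lt1 : σ' < 1 := Real.rpow_lt_one hσpos.le hσlt1 hexppos
  have hsum : Summable (fun i : ℕ => (K' ^ ((1:ℝ) / q) * σ') * σ' ^ i) :=
    (summable_geometric_of_lt_one hσ'pos.le hσ'lt1).mul_left _
  refine Summable.of_nonneg_of_le (fun i => ?_) (fun i => ?_) hsum
  · apply Real.rpow_nonneg
    exact le_trans (integral_nonneg fun ω => (Real.exp_pos _).le) (le_max_left _ _)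
  · rw [hmax i]
    have h1 : (∫ ω, Real.exp (-(q₁ * (r * ∑ j ∈ Finset.range (i + 1), θ j ω))) ∂P)
        ^ ((1:ℝ) / q) ≤ (K' * σ ^ (i + 1)) ^ ((1:ℝ) / q) :=
      Real.rpow_le_rpow (integral_nonneg fun ω => (Real.exp_pos _).le)
        (hIbound i) hexppos.le
    refine h1.trans_eq ?_
    rw [Real.mul_rpow hK'pos.le (pow_nonneg hσpos.le _)]
    have h2 : (σ ^ (i + 1) : ℝ) ^ ((1:ℝ) / q) = σ' ^ (i + 1) := by
      rw [← Real.rpow_natCast σ (i + 1), ← Real.rpow_mul hσpos.le, mul_comm,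
        Real.rpow_mul hσpos.le, Real.rpow_natCast]
    rw [h2, pow_succ]
    ring
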